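/- Let B be a square substochastic matrix. The following are equivalent: (i) the index of contraction ĉon B is finite; (ii) B is convergent, i.e. B^k → 0 as k → ∞; (iii) I − B is nonsingular. -/

import Mathlib

open Matrix Filter Finset

/-- A substochastic matrix: nonnegative entries, row sums at most one. -/
def IsSubstochastic {m n : Type*} [Fintype n] (B : Matrix m n ℝ) : Prop :=
  (∀ i j, 0 ≤ B i j) ∧ ∀ i, ∑ j, B i j ≤ 1

/-- Ĵ(B): the set of rows with row-sum strictly less than one. -/
def Jhat {m n : Type*} [Fintype n] (B : Matrix m n ℝ) : Set m :=
  {i | ∑ j, B i j < 1}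

/-- There is a walk of length `ℓ` (a nonempty sequence of `ℓ` consecutive edges) in the
digraph of `A` (edge `i → j` iff `A i j ≠ 0`) starting at `i` and ending in `S`. -/
def IsWalkTo {V : Type*} (A : Matrix V V ℝ) (i : V) (S : Set V) (ℓ : ℕ) : Prop :=
  1 ≤ ℓ ∧ ∃ w : ℕ → V, w 0 = i ∧ (∀ k < ℓ, A (w k) (w (k + 1)) ≠ 0) ∧ w ℓ ∈ S

/-- The index of contraction `ĉon B ∈ ℕ∞`:
`max(0, sup_{i ∉ Ĵ(B)} inf_{p ∈ P̂ᵢ(B)} |p|)` with `inf ∅ = ∞`, `sup ∅ = -∞`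
(in `ℕ∞` the empty supremum is `0`, matching `max(0, -∞) = 0`). -/
noncomputable def conHat {V : Type*} [Fintype V] (B : Matrix V V ℝ) : ℕ∞ :=
  ⨆ i ∈ (Jhat B)ᶜ, ⨅ ℓ ∈ {ℓ : ℕ | IsWalkTo B i (Jhat B) ℓ}, (ℓ : ℕ∞)

/-- The maximum absolute row-sum norm `‖·‖_∞`. -/
noncomputable def rowSumNorm {m n : Type*} [Fintype n] (B : Matrix m n ℝ) : ℝ :=
  ⨆ i, ∑ j, |B i j|

/-- `B` is convergent: `Bᵏ → 0` as `k → ∞`. -/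
def IsConvergent {V : Type*} [Fintype V] [DecidableEq V] (B : Matrix V V ℝ) : Prop :=
  Tendsto (fun k : ℕ => B ^ k) atTop (nhds 0)

/-- `B` is irreducible: its digraph is strongly connected, i.e. for every pair of
vertices `i, j` there is a walk from `i` to `j`. -/
def IsIrreducibleMat {V : Type*} (B : Matrix V V ℝ) : Prop :=
  ∀ i j : V, ∃ ℓ : ℕ, 1 ≤ ℓ ∧
    ∃ w : ℕ → V, w 0 = i ∧ w ℓ = j ∧ ∀ k < ℓ, B (w k) (w (k + 1)) ≠ 0


lemma rowsum_mul {n : ℕ} (A C : Matrix (Fin n) (Fin n) ℝ) (i : Fin n) :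
    ∑ j, (A * C) i j = ∑ t, A i t * ∑ j, C t j := by
  simp [Matrix.mul_apply, Finset.mul_sum]
  rw [Finset.sum_comm]

lemma pow_substochastic {n : ℕ} {B : Matrix (Fin n) (Fin n) ℝ} (hB : IsSubstochastic B)
    (k : ℕ) : IsSubstochastic (B ^ k) := by
  induction k with
  | zero => constructor
            · intro i j; simp [Matrix.one_apply]; positivity
            · intro i; simp [Matrix.one_apply]
  | succ k ih =>
      rw [pow_succ]
      constructor
      · intro i j
        rw [Matrix.mul_apply]
        exact Finset.sum_nonneg fun t _ => mul_nonneg (ih.1 i t) (hB.1 t j)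
      · intro i
        rw [rowsum_mul]
        calc ∑ t, (B ^ k) i t * ∑ j, B t j ≤ ∑ t, (B ^ k) i t * 1 :=
              Finset.sum_le_sum fun t _ => mul_le_mul_of_nonneg_left (hB.2 t) (ih.1 i t)
          _ ≤ 1 := by simpa using ih.2 i


lemma sum_mul_lt_one {n : ℕ} {B : Matrix (Fin n) (Fin n) ℝ} (hB : IsSubstochastic B)
    (j t0 : Fin n) (r : Fin n → ℝ) (hr1 : ∀ t, r t ≤ 1) (ht0 : B j t0 ≠ 0)
    (hrt0 : r t0 < 1) : ∑ t, B j t * r t < 1 := by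
  have hpos : 0 < B j t0 := lt_of_le_of_ne (hB.1 _ _) (Ne.symm ht0)
  have h1 : ∑ t, B j t * r t < ∑ t, B j t := by
    refine Finset.sum_lt_sum (fun t _ => ?_) ⟨t0, Finset.mem_univ _, ?_⟩
    · nlinarith [hB.1 j t, hr1 t]
    · nlinarith
  linarith [hB.2 j]

lemma walk_rowsum_lt {n : ℕ} {B : Matrix (Fin n) (Fin n) ℝ} (hB : IsSubstochastic B)
    {i : Fin n} {ℓ : ℕ} (h : IsWalkTo B i (Jhat B) ℓ) : ∑ j, (B ^ (ℓ + 1)) i j < 1 := by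
  obtain ⟨hℓ, w, hw0, hwe, hwJ⟩ := h
  have key : ∀ d, d ≤ ℓ → ∑ j, (B ^ (d + 1)) (w (ℓ - d)) j < 1 := by
    intro d
    induction d with
    | zero => intro _; simpa [Jhat] using hwJ
    | succ d ih =>
        intro hd
        have hd' : d ≤ ℓ := by omega
        have hstep : (ℓ - (d + 1)) + 1 = ℓ - d := by omega
        have hedge : B (w (ℓ - (d + 1))) (w (ℓ - d)) ≠ 0 := by
          have := hwe (ℓ - (d + 1)) (by omega)
          rwa [hstep] at this
        have : B ^ (d + 1 + 1) = B * B ^ (d + 1) := by rw [pow_succ']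
        rw [this]
        have hrs : ∑ j, (B * B ^ (d + 1)) (w (ℓ - (d + 1))) j
            = ∑ t, B (w (ℓ - (d + 1))) t * ∑ j, (B ^ (d + 1)) t j := rowsum_mul _ _ _
        rw [hrs]
        exact sum_mul_lt_one hB _ _ _ (fun t => (pow_substochastic hB (d + 1)).2 t)
          hedge (ih hd')
  have := key ℓ le_rfl
  simpa [hw0] using this

lemma rowsum_pow_mono {n : ℕ} {B : Matrix (Fin n) (Fin n) ℝ} (hB : IsSubstochastic B)
    (i : Fin n) {a b : ℕ} (hab : a ≤ b) : ∑ j, (B ^ b) i j ≤ ∑ j, (B ^ a) i j := by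
  have : B ^ b = B ^ a * B ^ (b - a) := by rw [← pow_add]; congr 1; omega
  rw [this, rowsum_mul]
  calc ∑ t, (B ^ a) i t * ∑ j, (B ^ (b - a)) t j ≤ ∑ t, (B ^ a) i t * 1 :=
        Finset.sum_le_sum fun t _ => mul_le_mul_of_nonneg_left
          ((pow_substochastic hB _).2 t) ((pow_substochastic hB a).1 i t)
    _ = ∑ j, (B ^ a) i j := by simp

/-- rowsum of (B^m)^q is ≤ c^q when all rowsums of B^m are ≤ c, 0 ≤ c. -/
lemma rowsum_pow_le_c {n : ℕ} {A : Matrix (Fin n) (Fin n) ℝ} (hA : IsSubstochastic A)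
    {c : ℝ} (hc0 : 0 ≤ c) (hc : ∀ i, ∑ j, A i j ≤ c) (q : ℕ) (i : Fin n) :
    ∑ j, (A ^ q) i j ≤ c ^ q := by
  induction q generalizing i with
  | zero => simp [Matrix.one_apply]
  | succ q ih =>
      rw [pow_succ']
      rw [rowsum_mul]
      calc ∑ t, A i t * ∑ j, (A ^ q) t j ≤ ∑ t, A i t * c ^ q :=
            Finset.sum_le_sum fun t _ => mul_le_mul_of_nonneg_left (ih t) (hA.1 i t)
        _ = (∑ t, A i t) * c ^ q := by rw [Finset.sum_mul]
        _ ≤ c * c ^ q := mul_le_mul_of_nonneg_right (hc i) (pow_nonneg hc0 q)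
        _ = c ^ (q + 1) := by ring

lemma convergent_of_rowsums_lt {n : ℕ} {B : Matrix (Fin n) (Fin n) ℝ}
    (hB : IsSubstochastic B) {m : ℕ} (hm : 1 ≤ m) (h : ∀ i, ∑ j, (B ^ m) i j < 1) :
    IsConvergent B := by
  rcases Nat.eq_zero_or_pos n with hn | hn
  · subst hn
    have : ∀ k : ℕ, B ^ k = 0 := fun k => Subsingleton.elim _ _
    simp only [IsConvergent, this]
    exact tendsto_const_nhds
  · have hne : (Finset.univ : Finset (Fin n)).Nonempty := ⟨⟨0, hn⟩, Finset.mem_univ _⟩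
    set c : ℝ := Finset.univ.sup' hne (fun i => ∑ j, (B ^ m) i j) with hcdef
    have hc1 : c < 1 := (Finset.sup'_lt_iff hne).2 fun i _ => h i
    have hc0 : 0 ≤ c := by
      obtain ⟨i0, _, hi0⟩ := Finset.exists_mem_eq_sup' hne (fun i => ∑ j, (B ^ m) i j)
      rw [hcdef, hi0]
      exact Finset.sum_nonneg fun j _ => (pow_substochastic hB m).1 i0 j
    have hcle : ∀ i, ∑ j, (B ^ m) i j ≤ c := fun i =>
      Finset.le_sup' (fun i => ∑ j, (B ^ m) i j) (Finset.mem_univ i)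
    -- entrywise bound : (B^k) i j ≤ c ^ (k / m)
    have hbound : ∀ k i j, (B ^ k) i j ≤ c ^ (k / m) := by
      intro k i j
      have h1 : (B ^ k) i j ≤ ∑ j', (B ^ k) i j' := by
        exact Finset.single_le_sum (fun t _ => (pow_substochastic hB k).1 i t)
          (Finset.mem_univ j)
      have h2 : ∑ j', (B ^ k) i j' ≤ ∑ j', (B ^ (m * (k / m))) i j' :=
        rowsum_pow_mono hB i (Nat.mul_div_le k m)
      have h3 : ∑ j', ((B ^ m) ^ (k / m)) i j' ≤ c ^ (k / m) :=
        rowsum_pow_le_c (pow_substochastic hB m) hc0 hcle (k / m) i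
      rw [← pow_mul] at h3
      linarith
    -- convergence
    rw [IsConvergent]; refine tendsto_pi_nhds.2 ?_
    intro i
    rw [tendsto_pi_nhds]
    intro j
    have hdiv : Tendsto (fun k : ℕ => k / m) atTop atTop := by
      apply tendsto_atTop_atTop.2
      intro b
      exact ⟨b * m + m, fun k hk => by
        rw [Nat.le_div_iff_mul_le hm]; omega⟩
    have hc' : Tendsto (fun k : ℕ => c ^ (k / m)) atTop (nhds 0) :=
      (tendsto_pow_atTop_nhds_zero_of_lt_one hc0 hc1).comp hdiv
    have : (fun k : ℕ => (0:Matrix (Fin n) (Fin n) ℝ) i j) = fun _ => (0:ℝ) := rfl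
    simp only [Matrix.zero_apply]
    exact squeeze_zero (fun k => (pow_substochastic hB k).1 i j)
      (fun k => hbound k i j) hc'

lemma conHat_ne_top_iff' {n : ℕ} (B : Matrix (Fin n) (Fin n) ℝ) :
    conHat B ≠ ⊤ ↔ ∀ i ∉ Jhat B, ∃ ℓ, IsWalkTo B i (Jhat B) ℓ := by
  constructor
  · intro h i hi
    by_contra hno
    push_neg at hno
    apply h
    have h1 : (⨅ ℓ ∈ {ℓ : ℕ | IsWalkTo B i (Jhat B) ℓ}, (ℓ:ℕ∞)) = ⊤ := by
      have he : {ℓ : ℕ | IsWalkTo B i (Jhat B) ℓ} = ∅ := by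
        ext ℓ; simp only [Set.mem_setOf_eq, Set.mem_empty_iff_false, iff_false]
        exact hno ℓ
      rw [he]; simp
    have h2 : (⊤:ℕ∞) ≤ conHat B := by
      rw [← h1]
      exact le_iSup₂ (f := fun i (_ : i ∈ (Jhat B)ᶜ) =>
        ⨅ ℓ ∈ {ℓ : ℕ | IsWalkTo B i (Jhat B) ℓ}, (ℓ:ℕ∞)) i hi
    exact top_le_iff.1 h2
  · intro hW
    classical
    choose! f hf using hW
    have hle : conHat B ≤ ((univ.sup f : ℕ) : ℕ∞) := by
      refine iSup₂_le fun i hi => ?_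
      have hi' : i ∉ Jhat B := hi
      calc (⨅ ℓ ∈ {ℓ : ℕ | IsWalkTo B i (Jhat B) ℓ}, (ℓ:ℕ∞)) ≤ ((f i : ℕ) : ℕ∞) :=
            biInf_le _ (hf i hi')
        _ ≤ _ := by exact_mod_cast Finset.le_sup (Finset.mem_univ i)
    exact ne_top_of_le_ne_top (by simp) hle

lemma exists_good_power {n : ℕ} {B : Matrix (Fin n) (Fin n) ℝ} (hB : IsSubstochastic B)
    (hW : ∀ i ∉ Jhat B, ∃ ℓ, IsWalkTo B i (Jhat B) ℓ) :
    ∃ m, 1 ≤ m ∧ ∀ i, ∑ j, (B ^ m) i j < 1 := by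
  classical
  choose! f hf using hW
  refine ⟨univ.sup (fun i => f i + 1) + 1, by omega, fun i => ?_⟩
  by_cases hi : i ∈ Jhat B
  · have h1 : ∑ j, (B ^ 1) i j < 1 := by simpa [Jhat] using hi
    exact lt_of_le_of_lt (rowsum_pow_mono hB i (by omega)) h1
  · have h2 := walk_rowsum_lt hB (hf i hi)
    refine lt_of_le_of_lt (rowsum_pow_mono hB i ?_) h2
    have h3 : f i + 1 ≤ univ.sup (fun i => f i + 1) :=
      Finset.le_sup (f := fun i => f i + 1) (Finset.mem_univ i)
    omega

lemma isUnit_of_convergent {n : ℕ} {B : Matrix (Fin n) (Fin n) ℝ}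
    (hC : IsConvergent B) : IsUnit (1 - B) := by
  rw [Matrix.isUnit_iff_isUnit_det, isUnit_iff_ne_zero]
  intro hdet
  obtain ⟨v, hv, hMv⟩ := (Matrix.exists_mulVec_eq_zero_iff (M := 1 - B)).2 hdet
  have hBv : B *ᵥ v = v := by
    have : (1 - B) *ᵥ v = v - B *ᵥ v := by
      rw [Matrix.sub_mulVec, Matrix.one_mulVec]
    rw [this] at hMv
    exact (sub_eq_zero.mp hMv).symm
  have hpow : ∀ k, (B ^ k) *ᵥ v = v := by
    intro k
    induction k with
    | zero => simp
    | succ k ih => rw [pow_succ', ← Matrix.mulVec_mulVec, ih, hBv]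
  have hcont : Continuous (fun M : Matrix (Fin n) (Fin n) ℝ => M *ᵥ v) :=
    continuous_id.matrix_mulVec continuous_const
  have hlim : Tendsto (fun k : ℕ => (B ^ k) *ᵥ v) atTop
      (nhds ((0 : Matrix (Fin n) (Fin n) ℝ) *ᵥ v)) :=
    ((hcont.tendsto 0).comp hC)
  simp only [hpow, Matrix.zero_mulVec] at hlim
  exact hv (tendsto_nhds_unique tendsto_const_nhds hlim)


lemma not_isUnit_of_no_walk {n : ℕ} {B : Matrix (Fin n) (Fin n) ℝ} (hB : IsSubstochastic B)
    {i : Fin n} (hi : i ∉ Jhat B) (hno : ∀ ℓ, ¬ IsWalkTo B i (Jhat B) ℓ) :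
    ¬ IsUnit (1 - B) := by
  classical
  set M := (1 : Matrix (Fin n) (Fin n) ℝ) - B with hM
  -- reachable set from i (including i itself)
  set R : Fin n → Prop := fun j => ∃ ℓ, ∃ w : ℕ → Fin n,
    w 0 = i ∧ w ℓ = j ∧ ∀ k < ℓ, B (w k) (w (k + 1)) ≠ 0 with hR
  set S : Finset (Fin n) := univ.filter R with hS
  have hiS : i ∈ S := by
    simp only [hS, Finset.mem_filter, Finset.mem_univ, true_and, hR]
    exact ⟨0, fun _ => i, rfl, rfl, by omega⟩
  have hclosure : ∀ j ∈ S, ∀ t, B j t ≠ 0 → t ∈ S := by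
    intro j hj t hjt
    simp only [hS, Finset.mem_filter, Finset.mem_univ, true_and, hR] at hj ⊢
    obtain ⟨ℓ, w, hw0, hwℓ, hwe⟩ := hj
    refine ⟨ℓ + 1, fun s => if s ≤ ℓ then w s else t, by simp [hw0], by simp, ?_⟩
    intro k hk
    rcases Nat.lt_or_ge k ℓ with h | h
    · simpa [Nat.le_of_lt h, Nat.succ_le_of_lt h] using hwe k h
    · have hkℓ : k = ℓ := by omega
      subst hkℓ
      simpa [hwℓ] using hjt
  have hnotJ : ∀ j ∈ S, j ∉ Jhat B := by
    intro j hj hjJ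
    simp only [hS, Finset.mem_filter, Finset.mem_univ, true_and, hR] at hj
    obtain ⟨ℓ, w, hw0, hwℓ, hwe⟩ := hj
    rcases Nat.eq_zero_or_pos ℓ with h0 | h0
    · subst h0; rw [hw0] at hwℓ; exact hi (hwℓ ▸ hjJ)
    · exact hno ℓ ⟨h0, w, hw0, hwe, hwℓ ▸ hjJ⟩
  have hrowone : ∀ j ∈ S, ∑ t, B j t = 1 := by
    intro j hj
    have h1 := hB.2 j
    have h2 : ¬ (∑ t, B j t < 1) := hnotJ j hj
    linarith [not_lt.mp h2]
  have hzero : ∀ j ∈ S, ∀ t, t ∉ S → B j t = 0 := by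
    intro j hj t ht
    by_contra hne
    exact ht (hclosure j hj t hne)
  have hMzero : ∀ j ∈ S, ∀ t, t ∉ S → M j t = 0 := by
    intro j hj t ht
    have hjt : j ≠ t := fun h => ht (h ▸ hj)
    simp [hM, Matrix.sub_apply, Matrix.one_apply, hjt, hzero j hj t ht]
  -- the S×S block of M kills the all-ones vector
  set N : Matrix ↥S ↥S ℝ := M.submatrix Subtype.val Subtype.val with hN
  have hNone : N *ᵥ (fun _ => (1:ℝ)) = 0 := by
    funext a
    simp only [Matrix.mulVec, dotProduct, mul_one, Pi.zero_apply, hN,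
      Matrix.submatrix_apply]
    have h1 : ∑ b : ↥S, M a.1 b.1 = ∑ t ∈ S, M a.1 t := by
      rw [← Finset.sum_attach S (fun t => M a.1 t)]
      simp [Finset.univ_eq_attach]
    rw [h1]
    have h2 : ∑ t ∈ S, M a.1 t = ∑ t, M a.1 t :=
      Finset.sum_subset (Finset.subset_univ S) (fun t _ ht => hMzero a.1 a.2 t ht)
    rw [h2]
    simp [hM, Matrix.sub_apply, Matrix.one_apply, Finset.sum_ite_eq,
      hrowone a.1 a.2, Finset.sum_sub_distrib]
  have hdetN : N.det = 0 := by
    rw [← Matrix.exists_mulVec_eq_zero_iff]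
    refine ⟨fun _ => 1, ?_, hNone⟩
    intro h
    have := congrFun h ⟨i, hiS⟩
    norm_num at this
  -- transpose has nontrivial kernel on S, extend by zero
  have hdetNT : Nᵀ.det = 0 := by rw [Matrix.det_transpose]; exact hdetN
  obtain ⟨u, hu, hNu⟩ := (Matrix.exists_mulVec_eq_zero_iff).2 hdetNT
  set ubar : Fin n → ℝ := fun t => if h : t ∈ S then u ⟨t, h⟩ else 0 with hubar
  have hMTu : Mᵀ *ᵥ ubar = 0 := by
    funext k
    simp only [Matrix.mulVec, dotProduct, Pi.zero_apply]
    have hsum : ∑ j, Mᵀ k j * ubar j = ∑ j ∈ S, Mᵀ k j * ubar j := by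
      refine (Finset.sum_subset (Finset.subset_univ S) (fun t _ ht => ?_)).symm
      simp [hubar, ht]
    rw [hsum]
    have hsum2 : ∑ j ∈ S, Mᵀ k j * ubar j = ∑ a ∈ S.attach, Mᵀ k a.1 * ubar a.1 :=
      (Finset.sum_attach S (fun j => Mᵀ k j * ubar j)).symm
    rw [hsum2]
    have hsum3 : ∀ a : ↥S, ubar a.1 = u a := by
      intro a; simp [hubar, a.2]
    by_cases hk : k ∈ S
    · have := congrFun hNu ⟨k, hk⟩
      simp only [Matrix.mulVec, dotProduct, Pi.zero_apply, Matrix.transpose_apply,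
        hN, Matrix.submatrix_apply, Finset.univ_eq_attach] at this
      calc ∑ a ∈ S.attach, Mᵀ k a.1 * ubar a.1
          = ∑ a ∈ S.attach, M a.1 k * u a := by
            refine Finset.sum_congr rfl fun a _ => ?_
            rw [Matrix.transpose_apply, hsum3]
        _ = 0 := this
    · refine Finset.sum_eq_zero fun a _ => ?_
      rw [Matrix.transpose_apply, hMzero a.1 a.2 k hk, zero_mul]
  have hdetMT : Mᵀ.det = 0 := by
    rw [← Matrix.exists_mulVec_eq_zero_iff]
    refine ⟨ubar, ?_, hMTu⟩
    intro h
    apply hu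
    funext a
    have := congrFun h a.1
    rw [hubar] at this
    simpa [a.2] using this
  have hdetM : M.det = 0 := by rw [← Matrix.det_transpose]; exact hdetMT
  rw [Matrix.isUnit_iff_isUnit_det, isUnit_iff_ne_zero]
  simpa using hdetM

theorem stmt3 {n : ℕ} (B : Matrix (Fin n) (Fin n) ℝ) (hB : IsSubstochastic B) :
    (conHat B ≠ ⊤ ↔ IsConvergent B) ∧
      (conHat B ≠ ⊤ ↔ IsUnit (1 - B)) := by
  have hW := conHat_ne_top_iff' B
  have h1 : conHat B ≠ ⊤ → IsConvergent B := by
    intro h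
    obtain ⟨m, hm, hrow⟩ := exists_good_power hB (hW.1 h)
    exact convergent_of_rowsums_lt hB hm hrow
  have h3 : IsUnit (1 - B) → conHat B ≠ ⊤ := by
    intro hU
    rw [hW]
    intro i hi
    by_contra hno
    push_neg at hno
    exact not_isUnit_of_no_walk hB hi hno hU
  exact ⟨⟨h1, fun hc => h3 (isUnit_of_convergent hc)⟩,
    ⟨fun h => isUnit_of_convergent (h1 h), h3⟩⟩
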